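/- Let Φ be a completely positive linear map on L(ℂ^m ⊗ ℂ^n) with Kraus decomposition Φ(X) = Σᵢ Aᵢ X Aᵢ*. Suppose Φ maps every operator of the form c|w⟩⟨w| with w separable to an operator of rank at most one. Then for every standard basis vector e_h of ℂ^m ⊗ ℂ^n of the form e_j ⊗ e_ℓ, the nonzero vectors among {Aᵢ e_h}ᵢ are pairwise parallel. -/

import Mathlib

noncomputable section

/-- The elementary tensor `a ⊗ b` in `ℂ^m ⊗ ℂ^n ≅ ℂ^(m×n)`. -/
def tens {m n : ℕ} (a : EuclideanSpace ℂ (Fin m)) (b : EuclideanSpace ℂ (Fin n)) :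
    EuclideanSpace ℂ (Fin m × Fin n) :=
  WithLp.toLp 2 (fun p : Fin m × Fin n => a p.1 * b p.2)

/-- The rank-one operator `|w⟩⟨w| : z ↦ ⟨w, z⟩ w`. -/
def proj {m n : ℕ} (w : EuclideanSpace ℂ (Fin m × Fin n)) :
    EuclideanSpace ℂ (Fin m × Fin n) →ₗ[ℂ] EuclideanSpace ℂ (Fin m × Fin n) :=
  ((innerSL ℂ w).smulRight w).toLinearMap

/-- If a completely positive map `Φ(X) = Σᵢ Aᵢ X Aᵢ*` sends every `c|w⟩⟨w|` with `w`
separable to an operator of rank at most one, then for each standard basis vector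
`e_j ⊗ e_ℓ`, the nonzero vectors among `{Aᵢ (e_j ⊗ e_ℓ)}ᵢ` are pairwise parallel. -/
theorem stmt18 {m n : ℕ} {ι : Type*} [Fintype ι]
    (A : ι → (EuclideanSpace ℂ (Fin m × Fin n) →ₗ[ℂ] EuclideanSpace ℂ (Fin m × Fin n)))
    (h : ∀ (c : ℂ) (a : EuclideanSpace ℂ (Fin m)) (b : EuclideanSpace ℂ (Fin n)),
      a ≠ 0 → b ≠ 0 →
      Module.finrank ℂ (LinearMap.range
        (∑ i, A i ∘ₗ (c • proj (tens a b)) ∘ₗ LinearMap.adjoint (A i))) ≤ 1) :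
    ∀ (j : Fin m) (ℓ : Fin n) (i₁ i₂ : ι),
      A i₁ (tens (EuclideanSpace.single j 1) (EuclideanSpace.single ℓ 1)) ≠ 0 →
      A i₂ (tens (EuclideanSpace.single j 1) (EuclideanSpace.single ℓ 1)) ≠ 0 →
      ∃ t : ℂ, A i₂ (tens (EuclideanSpace.single j 1) (EuclideanSpace.single ℓ 1)) =
        t • A i₁ (tens (EuclideanSpace.single j 1) (EuclideanSpace.single ℓ 1)) := by
  intro j ℓ i₁ i₂ h1 h2
  set w := tens (EuclideanSpace.single j 1) (EuclideanSpace.single ℓ 1) with hw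
  set v : ι → EuclideanSpace ℂ (Fin m × Fin n) := fun i => A i w with hv
  set T := ∑ i, A i ∘ₗ ((1:ℂ) • proj w) ∘ₗ LinearMap.adjoint (A i) with hT
  have hTapp : ∀ x, T x = ∑ i, (inner ℂ (v i) x : ℂ) • v i := by
    intro x
    rw [hT]
    simp only [LinearMap.sum_apply, LinearMap.comp_apply, LinearMap.smul_apply, one_smul]
    refine Finset.sum_congr rfl fun i _ => ?_
    have : proj w (LinearMap.adjoint (A i) x)
        = (inner ℂ w (LinearMap.adjoint (A i) x) : ℂ) • w := rfl
    rw [this, map_smul, LinearMap.adjoint_inner_right]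
  set S := Submodule.span ℂ (Set.range v) with hS
  have hvS : ∀ i, v i ∈ S := fun i => Submodule.subset_span ⟨i, rfl⟩
  have hrange : LinearMap.range T ≤ S := by
    rintro _ ⟨x, rfl⟩
    rw [hTapp]
    exact Submodule.sum_mem _ fun i _ => Submodule.smul_mem _ _ (hvS i)
  have hker : LinearMap.ker T = Sᗮ := by
    ext x
    constructor
    · intro hx
      have hx0 : T x = 0 := hx
      have hinner : (inner ℂ x (T x) : ℂ) = 0 := by rw [hx0, inner_zero_right]
      rw [hTapp] at hinner
      have : ∑ i, ((Complex.normSq (inner ℂ (v i) x : ℂ) : ℝ) : ℂ) = 0 := by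
        rw [← hinner, inner_sum]
        refine Finset.sum_congr rfl fun i _ => ?_
        rw [inner_smul_right, ← inner_conj_symm x (v i)]
        rw [Complex.normSq_eq_conj_mul_self]
        ring_nf
      have hsum : ∑ i, Complex.normSq (inner ℂ (v i) x : ℂ) = 0 := by
        have := this
        push_cast at this
        exact_mod_cast this
      have hall : ∀ i ∈ Finset.univ, Complex.normSq (inner ℂ (v i) x : ℂ) = 0 :=
        (Finset.sum_eq_zero_iff_of_nonneg fun i _ => Complex.normSq_nonneg _).mp hsum
      rw [Submodule.mem_orthogonal]
      intro u hu
      refine Submodule.span_induction (fun y hy => ?_) (inner_zero_left x)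
        (fun y z _ _ hy hz => by rw [inner_add_left, hy, hz, add_zero])
        (fun a y _ hy => by rw [inner_smul_left, hy, mul_zero]) hu
      obtain ⟨i, rfl⟩ := hy
      exact Complex.normSq_eq_zero.mp (hall i (Finset.mem_univ i))
    · intro hx
      have : T x = 0 := by
        rw [hTapp]
        refine Finset.sum_eq_zero fun i _ => ?_
        rw [Submodule.mem_orthogonal] at hx
        rw [hx (v i) (hvS i), zero_smul]
      exact this
  have hrk : Module.finrank ℂ (LinearMap.range T) ≤ 1 := by
    have h0 : (EuclideanSpace.single j (1:ℂ)) ≠ 0 := by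
      intro h0
      have := congrArg (fun f => f j) h0
      simp [EuclideanSpace.single_apply] at this
    have h0' : (EuclideanSpace.single ℓ (1:ℂ)) ≠ 0 := by
      intro h0
      have := congrArg (fun f => f ℓ) h0
      simp [EuclideanSpace.single_apply] at this
    exact h 1 _ _ h0 h0'
  have hdim1 : Module.finrank ℂ S ≤ 1 := by
    have e1 := LinearMap.finrank_range_add_finrank_ker T
    have e2 := Submodule.finrank_add_finrank_orthogonal S
    rw [hker] at e1
    omega
  have hsp : (ℂ ∙ v i₁) = S := by
    refine Submodule.eq_of_le_of_finrank_le ((Submodule.span_singleton_le_iff_mem _ _).mpr (hvS i₁)) ?_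
    rw [finrank_span_singleton h1]
    exact hdim1
  have : v i₂ ∈ (ℂ ∙ v i₁) := hsp ▸ hvS i₂
  obtain ⟨t, ht⟩ := Submodule.mem_span_singleton.mp this
  exact ⟨t, ht.symm⟩
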